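/- Let P = ⋃_{i∈I} L_i where each L_i is either a well order or the inverse of a well order, with I_w = {i : L_i infinite well order} and I_{w*} = {i : L_i infinite inverse well order} both nonempty, and I_fin = {i : L_i finite}. Then P is reversible if and only if both P_W = ⋃_{i∈I_fin ∪ I_w} L_i and P_{W*} = ⋃_{i∈I_fin ∪ I_{w*}} L_i are reversible. -/

import Mathlib

set_option linter.unusedSectionVars false

namespace Stmt11Aux

open Set

variable {α : Type*} [LinearOrder α]

lemma exists_max_of_finite {s : Set α} (hs : s.Finite) (hne : s.Nonempty) :
    ∃ m ∈ s, ∀ x ∈ s, x ≤ m := by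
  exact Set.exists_max_image s id hs hne

variable [WellFoundedLT α] [Infinite α]

lemma T_nonempty (k : ℕ) : {x : α | k ≤ (Iio x).ncard ∨ (Iio x).Infinite}.Nonempty := by
  obtain ⟨t, -, htf, htc⟩ := (Set.infinite_univ (α := α)).exists_subset_ncard_eq (k + 1)
  have htne : t.Nonempty := by
    rw [← Set.ncard_pos htf, htc]; omega
  obtain ⟨m, hm, hmax⟩ := exists_max_of_finite htf htne
  refine ⟨m, ?_⟩
  by_cases hfin : (Iio m).Finite
  · left
    have hsub : t \ {m} ⊆ Iio m := by
      rintro x ⟨hx, hxm⟩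
      exact lt_of_le_of_ne (hmax x hx) hxm
    have := Set.ncard_le_ncard hsub hfin
    have hd : (t \ {m}).ncard = k := by
      rw [Set.ncard_diff_singleton_of_mem hm, htc]; omega
    omega
  · right; exact hfin

/-- The enumeration of the first `ω` elements of an infinite well-founded linear order. -/
noncomputable def enum (k : ℕ) : α :=
  (IsWellFounded.wf (α := α) (r := (· < ·))).min _ (T_nonempty k)

lemma enum_mem (k : ℕ) : k ≤ (Iio (enum (α := α) k)).ncard ∨ (Iio (enum (α := α) k)).Infinite :=
  (IsWellFounded.wf).min_mem _ (T_nonempty k)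

lemma enum_min {k : ℕ} {x : α} (hx : k ≤ (Iio x).ncard ∨ (Iio x).Infinite) :
    enum (α := α) k ≤ x :=
  le_of_not_gt fun h => (IsWellFounded.wf).not_lt_min {x : α | k ≤ (Iio x).ncard ∨ (Iio x).Infinite} hx h

lemma Iio_enum_finite (k : ℕ) : (Iio (enum (α := α) k)).Finite := by
  by_contra hinf
  rw [← Set.not_infinite, not_not] at hinf
  obtain ⟨t, hts, htf, htc⟩ := hinf.exists_subset_ncard_eq (k + 1)
  have htne : t.Nonempty := by rw [← Set.ncard_pos htf, htc]; omega
  obtain ⟨m, hm, hmax⟩ := exists_max_of_finite htf htne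
  have hmlt : m < enum (α := α) k := hts hm
  have : enum (α := α) k ≤ m := by
    apply enum_min
    by_cases hfin : (Iio m).Finite
    · left
      have hsub : t \ {m} ⊆ Iio m := by
        rintro x ⟨hx, hxm⟩
        exact lt_of_le_of_ne (hmax x hx) hxm
      have := Set.ncard_le_ncard hsub hfin
      have hd : (t \ {m}).ncard = k := by
        rw [Set.ncard_diff_singleton_of_mem hm, htc]; omega
      omega
    · right; exact hfin
  exact absurd hmlt (not_lt.mpr this)

lemma ncard_Iio_enum (k : ℕ) : (Iio (enum (α := α) k)).ncard = k := by
  have hfin := Iio_enum_finite (α := α) k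
  have hk : k ≤ (Iio (enum (α := α) k)).ncard :=
    (enum_mem k).resolve_right hfin.not_infinite
  rcases eq_or_lt_of_le hk with h | h
  · exact h.symm
  · exfalso
    have hne : (Iio (enum (α := α) k)).Nonempty := by
      rw [← Set.ncard_pos hfin]; omega
    obtain ⟨m, hm, hmax⟩ := exists_max_of_finite hfin hne
    have hle : enum (α := α) k ≤ m := by
      apply enum_min
      left
      have heq : Iio m = Iio (enum (α := α) k) \ {m} := by
        ext x
        constructor
        · intro hx
          exact ⟨hx.trans hm, ne_of_lt hx⟩
        · rintro ⟨hx, hxm⟩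
          exact lt_of_le_of_ne (hmax x hx) hxm
      rw [heq, Set.ncard_diff_singleton_of_mem hm]
      omega
    exact absurd hm (not_lt.mpr hle)

/-- Characterization: `enum k` is the unique element with exactly `k` predecessors. -/
lemma enum_eq_of_card {x : α} {k : ℕ} (hfin : (Iio x).Finite) (hc : (Iio x).ncard = k) :
    x = enum (α := α) k := by
  have h1 : enum (α := α) k ≤ x := enum_min (Or.inl hc.ge)
  rcases eq_or_lt_of_le h1 with h | h
  · exact h.symm
  · exfalso
    have hsub : insert (enum (α := α) k) (Iio (enum (α := α) k)) ⊆ Iio x := by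
      intro y hy
      rcases hy with rfl | hy
      · exact h
      · exact lt_trans hy h
    have hcard := Set.ncard_le_ncard hsub hfin
    rw [Set.ncard_insert_of_notMem (by simp) (Iio_enum_finite k), ncard_Iio_enum, hc] at hcard
    omega

lemma enum_strictMono : StrictMono (enum (α := α)) := by
  intro j k hjk
  have h1 : enum (α := α) j ≠ enum (α := α) k := by
    intro h
    have := ncard_Iio_enum (α := α) j
    rw [h, ncard_Iio_enum] at this
    omega
  rcases lt_or_gt_of_ne h1 with h | h
  · exact h
  · exfalso
    have hsub : Iio (enum (α := α) k) ⊆ Iio (enum (α := α) j) := Set.Iio_subset_Iio h.le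
    have := Set.ncard_le_ncard hsub (Iio_enum_finite j)
    rw [ncard_Iio_enum, ncard_Iio_enum] at this
    omega

lemma lt_enum_iff {x : α} {k : ℕ} : x < enum (α := α) k ↔ ∃ j < k, x = enum (α := α) j := by
  constructor
  · intro hx
    have hfin : (Iio x).Finite := (Iio_enum_finite k).subset (Set.Iio_subset_Iio hx.le)
    refine ⟨(Iio x).ncard, ?_, enum_eq_of_card hfin rfl⟩
    have hsub : insert x (Iio x) ⊆ Iio (enum (α := α) k) := by
      intro y hy
      rcases hy with rfl | hy
      · exact hx
      · exact lt_trans hy hx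
    have := Set.ncard_le_ncard hsub (Iio_enum_finite k)
    rw [Set.ncard_insert_of_notMem (by simp) hfin, ncard_Iio_enum] at this
    omega
  · rintro ⟨j, hj, rfl⟩
    exact enum_strictMono hj

lemma enum_lt_of_infinite {x : α} (hx : (Iio x).Infinite) (k : ℕ) : enum (α := α) k < x := by
  rcases lt_or_ge (enum (α := α) k) x with h | h
  · exact h
  · exfalso
    exact hx ((Iio_enum_finite k).subset (Set.Iio_subset_Iio h))
variable {α : Type*} [LinearOrder α] [WellFoundedLT α] [Infinite α]

lemma ncard_Iio_lt_of_lt {x y : α} (hxy : x < y) (hy : (Iio y).Finite) :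
    (Iio x).ncard < (Iio y).ncard := by
  have hsub : insert x (Iio x) ⊆ Iio y := by
    intro z hz
    rcases hz with rfl | hz
    · exact hxy
    · exact lt_trans hz hxy
  have := Set.ncard_le_ncard hsub hy
  rw [Set.ncard_insert_of_notMem (by simp) (hy.subset (Set.Iio_subset_Iio hxy.le))] at this
  omega

/-- The shift map absorbing `n` extra bottom elements. -/
noncomputable def shift (n : ℕ) (x : α) : α :=
  @dite _ ((Iio x).Finite) (Classical.dec _) (fun _ => enum ((Iio x).ncard + n)) (fun _ => x)

lemma shift_of_finite {n : ℕ} {x : α} (h : (Iio x).Finite) :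
    shift n x = enum ((Iio x).ncard + n) := dif_pos h

lemma shift_of_infinite {n : ℕ} {x : α} (h : ¬ (Iio x).Finite) :
    shift n x = x := dif_neg h

lemma shift_strictMono (n : ℕ) : StrictMono (shift (α := α) n) := by
  intro x y hxy
  by_cases hy : (Iio y).Finite
  · have hx : (Iio x).Finite := hy.subset (Set.Iio_subset_Iio hxy.le)
    rw [shift_of_finite hx, shift_of_finite hy]
    exact enum_strictMono (by have := ncard_Iio_lt_of_lt hxy hy; omega)
  · by_cases hx : (Iio x).Finite
    · rw [shift_of_finite hx, shift_of_infinite hy]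
      exact enum_lt_of_infinite hy _
    · rw [shift_of_infinite hx, shift_of_infinite hy]
      exact hxy

lemma shift_covers (n : ℕ) (y : α) :
    (∃ k < n, enum (α := α) k = y) ∨ ∃ x, shift (α := α) n x = y := by
  by_cases hy : (Iio y).Finite
  · rcases lt_or_ge (Iio y).ncard n with h | h
    · exact Or.inl ⟨(Iio y).ncard, h, (enum_eq_of_card hy rfl).symm⟩
    · refine Or.inr ⟨enum ((Iio y).ncard - n), ?_⟩
      rw [shift_of_finite (Iio_enum_finite _), ncard_Iio_enum]
      rw [Nat.sub_add_cancel h]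
      exact (enum_eq_of_card hy rfl).symm
  · exact Or.inr ⟨y, shift_of_infinite hy⟩

lemma enum_lt_shift {n k : ℕ} (hk : k < n) (x : α) : enum (α := α) k < shift n x := by
  by_cases hx : (Iio x).Finite
  · rw [shift_of_finite hx]
    exact enum_strictMono (by omega)
  · rw [shift_of_infinite hx]
    exact enum_lt_of_infinite hx k
end Stmt11Aux
section SigmaMachinery

variable {I : Type*} {L : I → Type*} [∀ i, LinearOrder (L i)]

lemma fst_eq_of_le {x y : Σ i, L i} (h : x ≤ y) : x.1 = y.1 := by
  rcases h with ⟨i, a, b, h⟩; rfl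

variable {f : (Σ i, L i) → Σ i, L i}

/-- The induced map on components. -/
noncomputable def sig (f : (Σ i, L i) → Σ i, L i) (i : I) : I :=
  @dite _ (Nonempty (L i)) (Classical.dec _) (fun h => (f ⟨i, Classical.choice h⟩).1) (fun _ => i)

lemma sig_eq (hf : Monotone f) (i : I) (a : L i) : (f ⟨i, a⟩).1 = sig f i := by
  rw [sig, dif_pos (⟨a⟩ : Nonempty (L i))]
  set b := Classical.choice (⟨a⟩ : Nonempty (L i)) with hb
  rcases le_total a b with h | h
  · exact fst_eq_of_le (hf (Sigma.LE.fiber i a b h))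
  · exact (fst_eq_of_le (hf (Sigma.LE.fiber i b a h))).symm

/-- The induced map on a fiber. -/
noncomputable def fib (hf : Monotone f) (i : I) (a : L i) : L (sig f i) :=
  (sig_eq hf i a) ▸ (f ⟨i, a⟩).2

lemma f_eq (hf : Monotone f) (i : I) (a : L i) :
    f ⟨i, a⟩ = ⟨sig f i, fib hf i a⟩ :=
  Sigma.ext (sig_eq hf i a) (eqRec_heq _ _).symm

lemma fib_mono (hf : Monotone f) (i : I) : Monotone (fib hf i) := by
  intro a b hab
  have h := hf (Sigma.LE.fiber i a b hab)
  rw [f_eq hf, f_eq hf] at h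
  exact Sigma.mk_le_mk_iff.mp h

lemma fib_inj (hf : Monotone f) (hfi : Function.Injective f) (i : I) :
    Function.Injective (fib hf i) := by
  intro a b hab
  have : f ⟨i, a⟩ = f ⟨i, b⟩ := by rw [f_eq hf, f_eq hf, hab]
  simpa using hfi this

lemma fib_strictMono (hf : Monotone f) (hfi : Function.Injective f) (i : I) :
    StrictMono (fib hf i) :=
  (fib_mono hf i).strictMono_of_injective (fib_inj hf hfi i)

/-- the embedding of a sub-disjoint-union into the whole. -/
def emb (Q : I → Prop) : (Σ j : Subtype Q, L j) → Σ i, L i := fun p => ⟨p.1.1, p.2⟩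

lemma emb_inj (Q : I → Prop) : Function.Injective (emb (L := L) Q) := by
  rintro ⟨⟨i, hi⟩, a⟩ ⟨⟨j, hj⟩, b⟩ h
  obtain ⟨h1, h2⟩ := Sigma.mk.inj_iff.mp h
  dsimp at h1
  subst h1
  cases eq_of_heq h2
  rfl

lemma emb_le_emb_iff {Q : I → Prop} {x y : Σ j : Subtype Q, L j} :
    emb Q x ≤ emb Q y ↔ x ≤ y := by
  obtain ⟨⟨i, hi⟩, a⟩ := x
  obtain ⟨⟨j, hj⟩, b⟩ := y
  constructor
  · intro h
    have h1 : i = j := fst_eq_of_le h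
    subst h1
    have h' : (⟨i, a⟩ : Σ i, L i) ≤ ⟨i, b⟩ := h
    have h2 : a ≤ b := Sigma.mk_le_mk_iff.mp h'
    exact Sigma.mk_le_mk_iff.mpr h2
  · rintro ⟨p, a, b, hab⟩
    exact Sigma.LE.fiber _ a b hab

lemma finite_of_wf_wf (α : Type*) [LinearOrder α] [WellFoundedLT α]
    (hgt : WellFoundedGT α) : Finite α := by
  by_contra hfin
  haveI : Infinite α := ⟨hfin⟩
  have e : ((· > ·) : ℕ → ℕ → Prop) ↪r ((· > ·) : α → α → Prop) :=
    RelEmbedding.natGT (Stmt11Aux.enum (α := α))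
      (fun n => Stmt11Aux.enum_strictMono (Nat.lt_succ_self n))
  exact e.not_wellFounded hgt.wf

lemma orderIsoFin (β : Type*) [LinearOrder β] {m : ℕ} (hm : 0 < m) (h : Nat.card β = m) :
    Nonempty (β ≃o Fin m) := by
  subst h
  have hfin : Finite β := (Nat.card_pos_iff.mp hm).2
  have : Fintype β := Fintype.ofFinite β
  exact ⟨(monoEquivOfFin β (by rw [Nat.card_eq_fintype_card])).symm⟩

end SigmaMachinery
/-- A poset is reversible iff every bijective homomorphism (monotone bijection) of it to
itself is an automorphism (i.e. its inverse is also monotone). -/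
def Reversible (P : Type*) [PartialOrder P] : Prop :=
  ∀ f : P → P, Function.Bijective f → Monotone f → ∀ x y : P, f x ≤ f y → x ≤ y

section RevSubtype

variable {I : Type*} {L : I → Type*} [∀ i, LinearOrder (L i)]

lemma reversible_subtype (R : Reversible (Σ i, L i)) (Q : I → Prop) :
    Reversible (Σ j : Subtype Q, L j) := by
  intro g hgbij hgmono x y hle
  classical
  set G : (Σ i, L i) → Σ i, L i := fun p =>
    if h : Q p.1 then emb Q (g ⟨⟨p.1, h⟩, p.2⟩) else p with hG
  have hGemb : ∀ p : Σ j : Subtype Q, L j, G (emb Q p) = emb Q (g p) := by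
    rintro ⟨⟨i, hi⟩, a⟩
    simp only [hG, emb, dif_pos hi]
  have hGnot : ∀ p : Σ i, L i, ¬ Q p.1 → G p = p := fun p hp => dif_neg hp
  have hGQ : ∀ p : Σ i, L i, Q p.1 → Q (G p).1 := by
    intro p hp
    rw [hG]
    dsimp only
    rw [dif_pos hp]
    exact (g ⟨⟨p.1, hp⟩, p.2⟩).1.2
  have hGinj : Function.Injective G := by
    intro u v huv
    by_cases hu : Q u.1 <;> by_cases hv : Q v.1
    · rw [show G u = emb Q (g ⟨⟨u.1, hu⟩, u.2⟩) from dif_pos hu,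
        show G v = emb Q (g ⟨⟨v.1, hv⟩, v.2⟩) from dif_pos hv] at huv
      have := hgbij.1 (emb_inj Q huv)
      have h2 : emb Q ⟨⟨u.1, hu⟩, u.2⟩ = emb Q ⟨⟨v.1, hv⟩, v.2⟩ := by rw [this]
      have h3 : (⟨u.1, u.2⟩ : Σ i, L i) = ⟨v.1, v.2⟩ := h2
      rw [Sigma.eta, Sigma.eta] at h3
      exact h3
    · exfalso
      have h1 := hGQ u hu
      rw [huv, hGnot v hv] at h1
      exact hv h1
    · exfalso
      have h1 := hGQ v hv
      rw [← huv, hGnot u hu] at h1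
      exact hu h1
    · rwa [hGnot u hu, hGnot v hv] at huv
  have hGsurj : Function.Surjective G := by
    intro w
    by_cases hw : Q w.1
    · obtain ⟨q, hq⟩ := hgbij.2 ⟨⟨w.1, hw⟩, w.2⟩
      refine ⟨emb Q q, ?_⟩
      rw [hGemb, hq]
      show (⟨w.1, w.2⟩ : Σ i, L i) = w
      exact Sigma.eta w
    · exact ⟨w, hGnot w hw⟩
  have hGmono : Monotone G := by
    rintro u v ⟨i, a, b, hab⟩
    by_cases hi : Q i
    · rw [show G ⟨i, a⟩ = emb Q (g ⟨⟨i, hi⟩, a⟩) from dif_pos hi,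
        show G ⟨i, b⟩ = emb Q (g ⟨⟨i, hi⟩, b⟩) from dif_pos hi]
      exact emb_le_emb_iff.mpr (hgmono (Sigma.mk_le_mk_iff.mpr hab))
    · rw [hGnot ⟨i, a⟩ hi, hGnot ⟨i, b⟩ hi]
      exact Sigma.mk_le_mk_iff.mpr hab
  have key := R G ⟨hGinj, hGsurj⟩ hGmono (emb Q x) (emb Q y)
  rw [hGemb, hGemb] at key
  exact emb_le_emb_iff.mp (key (emb_le_emb_iff.mpr hle))

end RevSubtype
namespace Stmt11Aux

section L1Construction

variable {J : Type*} {K : J → Type*} [∀ j, LinearOrder (K j)]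
variable {n : ℕ} (E : ℕ → J) (j₀ : J)

/-- Auxiliary type: the components to be shifted. -/
def Mty (K : J → Type*) (E : ℕ → J) (j₀ : J) : Type _ := (Σ k : ℕ, K (E k)) ⊕ K j₀

/-- Inclusion into the disjoint union. -/
def iot : Mty K E j₀ → Σ j, K j := fun m =>
  match m with
  | .inl ⟨k, a⟩ => ⟨E k, a⟩
  | .inr x => ⟨j₀, x⟩

variable [Infinite (K j₀)] [WellFoundedLT (K j₀)]
variable (φ : ∀ k, K (E k) ≃o Fin (n + 1))

/-- The shift-and-absorb self-map. -/
noncomputable def gM : Mty K E j₀ → Mty K E j₀ := fun m =>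
  match m with
  | .inl ⟨0, a⟩ => .inr (enum (φ 0 a).1)
  | .inl ⟨k+1, a⟩ => .inl ⟨k, (φ k).symm (φ (k+1) a)⟩
  | .inr x => .inr (shift (n + 1) x)

variable {E j₀}

lemma iot_inj (hEinj : Function.Injective E) (hne : ∀ k, E k ≠ j₀) :
    Function.Injective (iot (K := K) E j₀) := by
  rintro (⟨k, a⟩ | x) (⟨k', b⟩ | y) h
  · obtain ⟨h1, h2⟩ := Sigma.mk.inj_iff.mp h
    obtain rfl := hEinj h1
    cases eq_of_heq h2
    rfl
  · exact absurd (Sigma.mk.inj_iff.mp h).1 (hne k)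
  · exact absurd (Sigma.mk.inj_iff.mp h).1 (Ne.symm (hne k'))
  · obtain ⟨-, h2⟩ := Sigma.mk.inj_iff.mp h
    cases eq_of_heq h2
    rfl

lemma gM_inj : Function.Injective (gM (K := K) E j₀ φ) := by
  rintro (⟨(_ | k), a⟩ | x) (⟨(_ | k'), b⟩ | y) h <;>
    simp only [gM, Sum.inl.injEq, Sum.inr.injEq, reduceCtorEq] at h
  · replace h := Sum.inr_injective h
    have h1 : ((φ 0) a : Fin (n + 1)).1 = ((φ 0) b).1 :=
      enum_strictMono.injective h
    have : (φ 0) a = (φ 0) b := Fin.ext h1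
    rw [(φ 0).injective this]
  · exact absurd (Sum.inr_injective h) (enum_lt_shift (Fin.is_lt _) y).ne
  · replace h := Sum.inl_injective h
    obtain ⟨h1, h2⟩ := Sigma.mk.inj_iff.mp h
    obtain rfl := h1
    have := (φ k).symm.injective (eq_of_heq h2)
    rw [(φ (k+1)).injective this]
  · exact absurd (Sum.inr_injective h.symm) (enum_lt_shift (Fin.is_lt _) x).ne
  · rw [(shift_strictMono (n+1)).injective (Sum.inr_injective h)]

lemma gM_surj : Function.Surjective (gM (K := K) E j₀ φ) := by
  rintro (⟨k, b⟩ | y)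
  · exact ⟨.inl ⟨k + 1, (φ (k+1)).symm (φ k b)⟩, by
      simp only [gM, OrderIso.apply_symm_apply, OrderIso.symm_apply_apply]
      rfl⟩
  · rcases shift_covers (n + 1) y with ⟨k, hk, hek⟩ | ⟨x, hx⟩
    · refine ⟨.inl ⟨0, (φ 0).symm ⟨k, hk⟩⟩, ?_⟩
      simp only [gM, OrderIso.apply_symm_apply]
      rw [hek]
    · exact ⟨.inr x, by simp only [gM]; rw [hx]⟩

end L1Construction

end Stmt11Aux
namespace Stmt11Aux

section L1b

variable {J : Type*} {K : J → Type*} [∀ j, LinearOrder (K j)]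
variable {n : ℕ} (E : ℕ → J) (j₀ : J)
variable [Infinite (K j₀)] [WellFoundedLT (K j₀)]
variable (φ : ∀ k, K (E k) ≃o Fin (n + 1))

/-- The self-map of the disjoint union induced by `gM`. -/
noncomputable def GG : (Σ j, K j) → Σ j, K j := fun p =>
  @dite _ (p ∈ Set.range (iot (K := K) E j₀)) (Classical.dec _)
    (fun h => iot E j₀ (gM E j₀ φ (Classical.choose h)))
    (fun _ => p)

variable {E j₀}

lemma GG_iot (hEinj : Function.Injective E) (hne : ∀ k, E k ≠ j₀) (m : Mty K E j₀) :
    GG E j₀ φ (iot E j₀ m) = iot E j₀ (gM E j₀ φ m) := by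
  have hm : iot E j₀ m ∈ Set.range (iot (K := K) E j₀) := ⟨m, rfl⟩
  simp only [GG]
  rw [dif_pos hm, iot_inj hEinj hne (Classical.choose_spec hm)]

lemma GG_not {p : Σ j, K j} (h : p ∉ Set.range (iot (K := K) E j₀)) :
    GG E j₀ φ p = p := by
  simp only [GG]
  exact dif_neg h

lemma GG_mem (m : Mty K E j₀) :
    iot E j₀ (gM E j₀ φ m) ∈ Set.range (iot (K := K) E j₀) := ⟨_, rfl⟩

lemma GG_bij (hEinj : Function.Injective E) (hne : ∀ k, E k ≠ j₀) : Function.Bijective (GG E j₀ φ) := by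
  constructor
  · intro u v huv
    by_cases hu : u ∈ Set.range (iot (K := K) E j₀) <;>
      by_cases hv : v ∈ Set.range (iot (K := K) E j₀)
    · obtain ⟨mu, rfl⟩ := hu
      obtain ⟨mv, rfl⟩ := hv
      rw [GG_iot φ hEinj hne, GG_iot φ hEinj hne] at huv
      rw [gM_inj φ (iot_inj hEinj hne huv)]
    · obtain ⟨mu, rfl⟩ := hu
      rw [GG_iot φ hEinj hne, GG_not φ hv] at huv
      exact absurd (huv ▸ GG_mem φ mu) hv
    · obtain ⟨mv, rfl⟩ := hv
      rw [GG_not φ hu, GG_iot φ hEinj hne] at huv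
      exact absurd (huv ▸ GG_mem φ mv) hu
    · rwa [GG_not φ hu, GG_not φ hv] at huv
  · intro w
    by_cases hw : w ∈ Set.range (iot (K := K) E j₀)
    · obtain ⟨m, rfl⟩ := hw
      obtain ⟨m', hm'⟩ := gM_surj φ m
      exact ⟨iot E j₀ m', by rw [GG_iot φ hEinj hne, hm']⟩
    · exact ⟨w, GG_not φ hw⟩

lemma GG_mono (hEinj : Function.Injective E) (hne : ∀ k, E k ≠ j₀) : Monotone (GG E j₀ φ) := by
  rintro u v ⟨j, a, b, hab⟩
  by_cases hj0 : j = j₀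
  · subst hj0
    rw [show (⟨j, a⟩ : Σ j, K j) = iot E j (.inr a) from rfl,
      show (⟨j, b⟩ : Σ j, K j) = iot E j (.inr b) from rfl,
      GG_iot φ hEinj hne (.inr a), GG_iot φ hEinj hne (.inr b)]
    show (⟨j, shift (n+1) a⟩ : Σ j, K j) ≤ ⟨j, shift (n+1) b⟩
    exact Sigma.mk_le_mk_iff.mpr ((shift_strictMono (n+1)).monotone hab)
  · by_cases hjE : ∃ k, j = E k
    · obtain ⟨k, rfl⟩ := hjE
      rw [show (⟨E k, a⟩ : Σ j, K j) = iot E j₀ (.inl ⟨k, a⟩) from rfl,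
        show (⟨E k, b⟩ : Σ j, K j) = iot E j₀ (.inl ⟨k, b⟩) from rfl,
        GG_iot φ hEinj hne (.inl ⟨k, a⟩), GG_iot φ hEinj hne (.inl ⟨k, b⟩)]
      cases k with
      | zero =>
        show (⟨j₀, enum ((φ 0) a).1⟩ : Σ j, K j) ≤ ⟨j₀, enum ((φ 0) b).1⟩
        exact Sigma.mk_le_mk_iff.mpr
          (enum_strictMono.monotone (Fin.le_iff_val_le_val.mp ((φ 0).monotone hab)))
      | succ k =>
        show (⟨E k, (φ k).symm (φ (k+1) a)⟩ : Σ j, K j) ≤ ⟨E k, (φ k).symm (φ (k+1) b)⟩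
        exact Sigma.mk_le_mk_iff.mpr ((φ k).symm.monotone ((φ (k+1)).monotone hab))
    · have hnot : ∀ c : K j, (⟨j, c⟩ : Σ j, K j) ∉ Set.range (iot (K := K) E j₀) := by
        rintro c ⟨m, hm⟩
        rcases m with ⟨k, d⟩ | x
        · exact hjE ⟨k, ((Sigma.mk.inj_iff.mp hm).1).symm⟩
        · exact hj0 ((Sigma.mk.inj_iff.mp hm).1).symm
      rw [GG_not φ (hnot a), GG_not φ (hnot b)]
      exact Sigma.mk_le_mk_iff.mpr hab

end L1b

section L1c

variable {J : Type*} {K : J → Type*} [∀ j, LinearOrder (K j)]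
variable {n : ℕ} {E : ℕ → J} {j₀ : J}
variable [Infinite (K j₀)] [WellFoundedLT (K j₀)]

lemma not_reversible_of_rep (φ : ∀ k, K (E k) ≃o Fin (n + 1))
    (hEinj : Function.Injective E) (hne : ∀ k, E k ≠ j₀) (hn : 0 < n + 1) :
    ¬ Reversible (Σ j, K j) := by
  intro R
  set x : Σ j, K j := iot E j₀ (.inl ⟨0, (φ 0).symm ⟨0, hn⟩⟩) with hx
  set y : Σ j, K j := iot E j₀ (.inr (enum 0)) with hy
  have hgx : GG E j₀ φ x = iot E j₀ (.inr (enum 0)) := by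
    rw [hx, GG_iot φ hEinj hne (.inl ⟨0, (φ 0).symm ⟨0, hn⟩⟩)]
    show iot E j₀ (.inr (enum ((φ 0) ((φ 0).symm ⟨0, hn⟩)).1)) = _
    rw [OrderIso.apply_symm_apply]
  have hgy : GG E j₀ φ y = iot E j₀ (.inr (shift (n+1) (enum 0))) := by
    rw [hy, GG_iot φ hEinj hne (.inr (enum 0))]
    rfl
  have hle : GG E j₀ φ x ≤ GG E j₀ φ y := by
    rw [hgx, hgy]
    show (⟨j₀, enum 0⟩ : Σ j, K j) ≤ ⟨j₀, shift (n+1) (enum 0)⟩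
    exact Sigma.mk_le_mk_iff.mpr (enum_lt_shift (Nat.succ_pos n) _).le
  have := fst_eq_of_le (R _ (GG_bij φ hEinj hne) (GG_mono φ hEinj hne) x y hle)
  rw [hx, hy] at this
  exact hne 0 this

end L1c

end Stmt11Aux
section FiniteToOne

variable {I : Type*} {L : I → Type*} [∀ i, LinearOrder (L i)]

lemma card_classes_finite
    (hw : ∃ i, Infinite (L i) ∧ WellFoundedLT (L i))
    (R : Reversible (Σ i : {i // Finite (L i) ∨ (Infinite (L i) ∧ WellFoundedLT (L i))}, L i))
    (n : ℕ) : {i | Nat.card (L i) = n + 1}.Finite := by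
  by_contra hC
  obtain ⟨i₀, hinf₀, hwf₀⟩ := hw
  haveI := hinf₀
  haveI := hwf₀
  have hCinf : {i | Nat.card (L i) = n + 1}.Infinite := hC
  haveI := hCinf.to_subtype
  let e := Infinite.natEmbedding {i | Nat.card (L i) = n + 1}
  have hcard : ∀ k, Nat.card (L ((e k).1 : I)) = n + 1 := fun k => (e k).2
  have hfin : ∀ k, Finite (L ((e k).1 : I)) :=
    fun k => (Nat.card_pos_iff.mp (by rw [hcard k]; omega)).2
  have hφ : ∀ k, Nonempty (L ((e k).1 : I) ≃o Fin (n + 1)) :=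
    fun k => orderIsoFin _ (Nat.succ_pos n) (hcard k)
  refine Stmt11Aux.not_reversible_of_rep
    (K := fun j : {i // Finite (L i) ∨ (Infinite (L i) ∧ WellFoundedLT (L i))} => L j.1)
    (E := fun k => ⟨(e k).1, Or.inl (hfin k)⟩)
    (j₀ := ⟨i₀, Or.inr ⟨hinf₀, hwf₀⟩⟩)
    (fun k => (hφ k).some) ?_ ?_ (Nat.succ_pos n) R
  · intro a b h
    exact e.injective (Subtype.ext (Subtype.mk.inj h))
  · intro k h
    have h1 : ((e k).1 : I) = i₀ := Subtype.mk.inj h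
    have h2 := hcard k
    rw [h1, Nat.card_eq_zero_of_infinite] at h2
    omega

end FiniteToOne
section Counting

variable {I : Type*} {L : I → Type*} [∀ i, LinearOrder (L i)]

/-- components of positive size at most `n` -/
def Aset (L : I → Type*) (n : ℕ) : Set I := {j | 0 < Nat.card (L j) ∧ Nat.card (L j) ≤ n}

variable (L) in
/-- disjoint union over components in `Aset` -/
def Yty (n : ℕ) : Type _ := Σ p : {j // j ∈ Aset L n}, L p.1

/-- disjoint union over components of `Aset` staying in `Aset` -/
def Xty (f : (Σ i, L i) → Σ i, L i) (n : ℕ) : Type _ :=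
  Σ p : {j // j ∈ Aset L n ∧ sig f j ∈ Aset L n}, L p.1

variable {f : (Σ i, L i) → Σ i, L i}

/-- the map induced by `f` from `Xty` to `Yty` -/
noncomputable def FXY (hf : Monotone f) (n : ℕ) : Xty f n → Yty L n := fun p =>
  ⟨⟨sig f p.1.1, p.1.2.2⟩, fib hf p.1.1 p.2⟩

/-- the inclusion of `Xty` into `Yty` -/
def inclXY (n : ℕ) : Xty f n → Yty L n := fun p => ⟨⟨p.1.1, p.1.2.1⟩, p.2⟩

lemma embY_FXY (hf : Monotone f) (n : ℕ) (p : Xty f n) :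
    emb _ (FXY hf n p) = f (emb _ p) := (f_eq hf p.1.1 p.2).symm

lemma FXY_inj (hf : Monotone f) (hbij : Function.Bijective f) (n : ℕ) :
    Function.Injective (FXY hf n) := by
  intro p q h
  have h1 : f (emb _ p) = f (emb _ q) := by
    rw [← embY_FXY hf n p, ← embY_FXY hf n q, h]
  exact emb_inj _ (hbij.1 h1)

lemma FXY_surj (hf : Monotone f) (hbij : Function.Bijective f) (n : ℕ) :
    Function.Surjective (FXY hf n) := by
  rintro ⟨⟨j, hjA⟩, b⟩
  obtain ⟨⟨i, a⟩, hq⟩ := hbij.2 ⟨j, b⟩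
  have h1 : sig f i = j := (Sigma.mk.inj_iff.mp ((f_eq hf i a).symm.trans hq)).1
  haveI hjfin : Finite (L j) := (Nat.card_pos_iff.mp hjA.1).2
  haveI hsfin : Finite (L (sig f i)) := by rw [h1]; exact hjfin
  haveI : Finite (L i) := Finite.of_injective _ (fib_inj hf hbij.1 i)
  haveI : Nonempty (L i) := ⟨a⟩
  have hile : Nat.card (L i) ≤ Nat.card (L j) := by
    rw [← h1]
    exact Nat.card_le_card_of_injective _ (fib_inj hf hbij.1 i)
  have hiA : i ∈ Aset L n := ⟨Nat.card_pos, le_trans hile hjA.2⟩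
  refine ⟨⟨⟨i, hiA, by rw [h1]; exact hjA⟩, a⟩, ?_⟩
  apply emb_inj (fun j => j ∈ Aset L n)
  refine (embY_FXY hf n _).trans ?_
  exact hq

lemma sig_finite_of_finite (hf : Monotone f) (hbij : Function.Bijective f)
    (hfto : ∀ n, {i | Nat.card (L i) = n + 1}.Finite)
    (i : I) (a : L i) (hfin : Finite (L i)) : Finite (L (sig f i)) := by
  by_contra hj
  haveI hinfs : Infinite (L (sig f i)) := ⟨hj⟩
  haveI : Nonempty (L i) := ⟨a⟩
  have hn : 0 < Nat.card (L i) := Nat.card_pos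
  set n := Nat.card (L i) with hndef
  have hAfin : (Aset L n).Finite := by
    apply Set.Finite.subset (Set.Finite.biUnion (Finset.range n).finite_toSet
      (fun m _ => hfto m))
    intro j hjmem
    obtain ⟨h1, h2⟩ := hjmem
    have : j ∈ ⋃ m ∈ (↑(Finset.range n) : Set ℕ), {i | Nat.card (L i) = m + 1} := by
      simp only [Set.mem_iUnion, Set.mem_setOf_eq, Finset.coe_range, Set.mem_Iio]
      exact ⟨Nat.card (L j) - 1, by omega, by omega⟩
    exact this
  haveI : Finite {j // j ∈ Aset L n} := hAfin.to_subtype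
  haveI : ∀ p : {j // j ∈ Aset L n}, Finite (L p.1) := fun p => (Nat.card_pos_iff.mp p.2.1).2
  haveI : Finite (Yty L n) := by unfold Yty; infer_instance
  have hiA : i ∈ Aset L n := ⟨hn, le_refl n⟩
  have hsA : sig f i ∉ Aset L n := by
    intro hmem
    have := hmem.1
    rw [Nat.card_eq_zero_of_infinite] at this
    omega
  have hincl_inj : Function.Injective (inclXY (f := f) n) := by
    intro p q h
    have h2 : emb (fun j => j ∈ Aset L n ∧ sig f j ∈ Aset L n) p
        = emb (fun j => j ∈ Aset L n ∧ sig f j ∈ Aset L n) q := by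
      have h3 := congrArg (emb (fun j => j ∈ Aset L n)) h
      exact h3
    exact emb_inj _ h2
  have EF := Equiv.ofBijective _ ⟨FXY_inj hf hbij n, FXY_surj hf hbij n⟩
  have hcomp_inj : Function.Injective (inclXY (f := f) n ∘ EF.symm) :=
    hincl_inj.comp EF.symm.injective
  obtain ⟨y, hy⟩ := (Finite.injective_iff_surjective.mp hcomp_inj) (⟨⟨i, hiA⟩, a⟩ : Yty L n)
  have h1 : (EF.symm y).1.1 = i :=
    Subtype.mk.inj (Sigma.mk.inj_iff.mp hy).1
  exact hsA (h1 ▸ (EF.symm y).1.2.2)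


end Counting
section Restrict

variable {I : Type*} {L : I → Type*} [∀ i, LinearOrder (L i)]
variable {f : (Σ i, L i) → Σ i, L i}

lemma sig_wflt (hf : Monotone f) (hfi : Function.Injective f) (i : I)
    (hwoσ : WellFoundedLT (L (sig f i)) ∨ WellFoundedGT (L (sig f i)))
    (hinf : Infinite (L i)) (h : WellFoundedLT (L i)) :
    Infinite (L (sig f i)) ∧ WellFoundedLT (L (sig f i)) := by
  have hinfσ : Infinite (L (sig f i)) := Infinite.of_injective _ (fib_inj hf hfi i)
  refine ⟨hinfσ, ?_⟩
  rcases hwoσ with h1 | h1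
  · exact h1
  · exfalso
    haveI := h
    haveI := h1
    haveI : WellFoundedGT (L i) := (fib_strictMono hf hfi i).wellFoundedGT
    exact hinf.not_finite (finite_of_wf_wf (L i) ‹_›)

lemma sig_wfgt (hf : Monotone f) (hfi : Function.Injective f) (i : I)
    (hwoσ : WellFoundedLT (L (sig f i)) ∨ WellFoundedGT (L (sig f i)))
    (hinf : Infinite (L i)) (h : WellFoundedGT (L i)) :
    Infinite (L (sig f i)) ∧ WellFoundedGT (L (sig f i)) := by
  have hinfσ : Infinite (L (sig f i)) := Infinite.of_injective _ (fib_inj hf hfi i)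
  refine ⟨hinfσ, ?_⟩
  rcases hwoσ with h1 | h1
  · exfalso
    haveI := h1
    haveI : WellFoundedLT (L i) := (fib_strictMono hf hfi i).wellFoundedLT
    exact hinf.not_finite (finite_of_wf_wf (L i) h)
  · exact h1

lemma restricted_reflect (hf : Monotone f) (hbij : Function.Bijective f) (Q : I → Prop)
    (hQpres : ∀ i₁, L i₁ → Q i₁ → Q (sig f i₁))
    (hQback : ∀ i₁, L i₁ → Q (sig f i₁) → Q i₁)
    (RQ : Reversible (Σ p : Subtype Q, L p.1))
    {i i' : I} {a : L i} {b : L i'} (hQi : Q i) (hQi' : Q i')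
    (hle : f ⟨i, a⟩ ≤ f ⟨i', b⟩) : (⟨i, a⟩ : Σ i, L i) ≤ ⟨i', b⟩ := by
  set gW : (Σ p : Subtype Q, L p.1) → Σ p : Subtype Q, L p.1 :=
    fun p => ⟨⟨sig f p.1.1, hQpres p.1.1 p.2 p.1.2⟩, fib hf p.1.1 p.2⟩ with hgW
  have key : ∀ p, emb Q (gW p) = f (emb Q p) := fun p => (f_eq hf p.1.1 p.2).symm
  have hinj : Function.Injective gW := by
    intro p q h
    have h1 : f (emb Q p) = f (emb Q q) := by rw [← key, ← key, h]
    exact emb_inj Q (hbij.1 h1)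
  have hsurj : Function.Surjective gW := by
    rintro ⟨⟨j₁, hq₁⟩, b₁⟩
    obtain ⟨⟨i₁, a₁⟩, hq⟩ := hbij.2 ⟨j₁, b₁⟩
    have h1 : sig f i₁ = j₁ := (Sigma.mk.inj_iff.mp ((f_eq hf i₁ a₁).symm.trans hq)).1
    have hQi₁ : Q i₁ := hQback i₁ a₁ (by rw [h1]; exact hq₁)
    refine ⟨⟨⟨i₁, hQi₁⟩, a₁⟩, emb_inj Q ?_⟩
    rw [key]
    exact hq
  have hmono : Monotone gW := by
    rintro p q ⟨idx, a₁, b₁, hab⟩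
    exact Sigma.mk_le_mk_iff.mpr (fib_mono hf idx.1 hab)
  have h2 : gW ⟨⟨i, hQi⟩, a⟩ ≤ gW ⟨⟨i', hQi'⟩, b⟩ := by
    rw [← emb_le_emb_iff, key, key]
    exact hle
  have h3 := RQ gW ⟨hinj, hsurj⟩ hmono _ _ h2
  exact emb_le_emb_iff.mpr h3

end Restrict
/-- Let P = ⋃_{i∈I} L_i where each L_i is a well order or the inverse of a
well order, and both I_w (infinite well order components) and I_{w*} (infinite inverse
well order components) are nonempty. Then P is reversible iff both
P_W = ⋃_{i ∈ I_fin ∪ I_w} L_i and P_{W*} = ⋃_{i ∈ I_fin ∪ I_{w*}} L_i are reversible. -/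
theorem stmt11 {I : Type*} (L : I → Type*) [∀ i, LinearOrder (L i)]
    (hwo : ∀ i, WellFoundedLT (L i) ∨ WellFoundedGT (L i))
    (hw : ∃ i, Infinite (L i) ∧ WellFoundedLT (L i))
    (hws : ∃ i, Infinite (L i) ∧ WellFoundedGT (L i)) :
    Reversible (Σ i, L i) ↔
      (Reversible (Σ i : {i // Finite (L i) ∨ (Infinite (L i) ∧ WellFoundedLT (L i))}, L i) ∧
        Reversible (Σ i : {i // Finite (L i) ∨ (Infinite (L i) ∧ WellFoundedGT (L i))}, L i)) := by
  constructor
  · intro R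
    exact ⟨reversible_subtype R _, reversible_subtype R _⟩
  · rintro ⟨R1, R2⟩
    intro f hbij hf x y hle
    have hfto := card_classes_finite hw R1
    obtain ⟨i, a⟩ := x
    obtain ⟨i', b⟩ := y
    have h1 : sig f i = sig f i' := by
      have h0 := fst_eq_of_le hle
      rw [sig_eq hf i a, sig_eq hf i' b] at h0
      exact h0
    have hQW : ∀ i₁, L i₁ → (Finite (L i₁) ∨ (Infinite (L i₁) ∧ WellFoundedLT (L i₁))) →
        (Finite (L (sig f i₁)) ∨ (Infinite (L (sig f i₁)) ∧ WellFoundedLT (L (sig f i₁)))) := by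
      intro i₁ a₁ hq
      rcases hq with hq | ⟨hq1, hq2⟩
      · exact Or.inl (sig_finite_of_finite hf hbij hfto i₁ a₁ hq)
      · exact Or.inr (sig_wflt hf hbij.1 i₁ (hwo _) hq1 hq2)
    have hQWback : ∀ i₁, L i₁ →
        (Finite (L (sig f i₁)) ∨ (Infinite (L (sig f i₁)) ∧ WellFoundedLT (L (sig f i₁)))) →
        (Finite (L i₁) ∨ (Infinite (L i₁) ∧ WellFoundedLT (L i₁))) := by
      intro i₁ a₁ hq
      by_cases hf1 : Finite (L i₁)
      · exact Or.inl hf1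
      · haveI : Infinite (L i₁) := ⟨hf1⟩
        rcases hwo i₁ with h2 | h2
        · exact Or.inr ⟨‹_›, h2⟩
        · exfalso
          obtain ⟨hinfσ, hgtσ⟩ := sig_wfgt hf hbij.1 i₁ (hwo _) ‹_› h2
          rcases hq with hq | ⟨hq1, hq2⟩
          · exact hinfσ.not_finite hq
          · haveI := hq2
            exact hinfσ.not_finite (finite_of_wf_wf _ hgtσ)
    have hQS : ∀ i₁, L i₁ → (Finite (L i₁) ∨ (Infinite (L i₁) ∧ WellFoundedGT (L i₁))) →
        (Finite (L (sig f i₁)) ∨ (Infinite (L (sig f i₁)) ∧ WellFoundedGT (L (sig f i₁)))) := by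
      intro i₁ a₁ hq
      rcases hq with hq | ⟨hq1, hq2⟩
      · exact Or.inl (sig_finite_of_finite hf hbij hfto i₁ a₁ hq)
      · exact Or.inr (sig_wfgt hf hbij.1 i₁ (hwo _) hq1 hq2)
    have hQSback : ∀ i₁, L i₁ →
        (Finite (L (sig f i₁)) ∨ (Infinite (L (sig f i₁)) ∧ WellFoundedGT (L (sig f i₁)))) →
        (Finite (L i₁) ∨ (Infinite (L i₁) ∧ WellFoundedGT (L i₁))) := by
      intro i₁ a₁ hq
      by_cases hf1 : Finite (L i₁)
      · exact Or.inl hf1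
      · haveI : Infinite (L i₁) := ⟨hf1⟩
        rcases hwo i₁ with h2 | h2
        · exfalso
          obtain ⟨hinfσ, hltσ⟩ := sig_wflt hf hbij.1 i₁ (hwo _) ‹_› h2
          rcases hq with hq | ⟨hq1, hq2⟩
          · exact hinfσ.not_finite hq
          · haveI := hltσ
            exact hinfσ.not_finite (finite_of_wf_wf _ hq2)
        · exact Or.inr ⟨‹_›, h2⟩
    by_cases hcase : Finite (L (sig f i)) ∨ (Infinite (L (sig f i)) ∧ WellFoundedLT (L (sig f i)))
    · exact restricted_reflect hf hbij _ hQW hQWback R1 (hQWback i a hcase)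
        (hQWback i' b (h1 ▸ hcase)) hle
    · have hcase2 : Finite (L (sig f i)) ∨ (Infinite (L (sig f i)) ∧ WellFoundedGT (L (sig f i))) := by
        by_cases hfin : Finite (L (sig f i))
        · exact Or.inl hfin
        · haveI : Infinite (L (sig f i)) := ⟨hfin⟩
          rcases hwo (sig f i) with h2 | h2
          · exact absurd (Or.inr ⟨‹_›, h2⟩) hcase
          · exact Or.inr ⟨‹_›, h2⟩
      exact restricted_reflect hf hbij _ hQS hQSback R2 (hQSback i a hcase2)
        (hQSback i' b (h1 ▸ hcase2)) hle
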